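/- arXiv:math/0401035 — 5 statements merged into one kernel-verified Lean document; each statement's English description precedes it below -/
import Mathlib

section
/- Let α, β be elements of the Laurent polynomial ring ℤ[A, A⁻¹], and define ⟨K⟩ = -A⁻³·α - A³·β and ⟨K_s⟩ = -A³·α - A⁻³·β. Then (⟨K⟩ = A⁶·⟨K_s⟩ or ⟨K⟩ = A⁻⁶·⟨K_s⟩) if and only if (α = 0 or β = 0). (Note that ((-A)³)^{±2} = A^{±6}.) -/
open LaurentPolynomial

theorem bracket_unit_iff (α β K Ks : LaurentPolynomial ℤ)
    (hK : K = -T (-3) * α - T 3 * β)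
    (hKs : Ks = -T 3 * α - T (-3) * β) :
    (K = T 6 * Ks ∨ K = T (-6) * Ks) ↔ (α = 0 ∨ β = 0) := by
  have hT : ∀ a b : ℤ, a ≠ b → T (a : ℤ) ≠ (T b : LaurentPolynomial ℤ) := by
    intro a b hab h
    exact hab (AddMonoidAlgebra.single_left_injective (one_ne_zero) h)
  have h9 : (T 6 : LaurentPolynomial ℤ) * T 3 = T 9 := by rw [← T_add]; norm_num
  have h3 : (T 6 : LaurentPolynomial ℤ) * T (-3) = T 3 := by rw [← T_add]; norm_num
  have h3' : (T (-6) : LaurentPolynomial ℤ) * T 3 = T (-3) := by rw [← T_add]; norm_num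
  have h9' : (T (-6) : LaurentPolynomial ℤ) * T (-3) = T (-9) := by rw [← T_add]; norm_num
  subst hK hKs
  constructor
  · rintro (h | h)
    · left
      have key : (T (-3) - T 9) * α = 0 := by linear_combination -h + α * h9 + β * h3
      rcases mul_eq_zero.mp key with h' | h'
      · exact absurd (sub_eq_zero.mp h') (hT _ _ (by norm_num))
      · exact h'
    · right
      have key : (T 3 - T (-9)) * β = 0 := by linear_combination -h + α * h3' + β * h9'
      rcases mul_eq_zero.mp key with h' | h'
      · exact absurd (sub_eq_zero.mp h') (hT _ _ (by norm_num))
      · exact h'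
  · rintro (h | h) <;> subst h
    · left; linear_combination β * h3
    · right; linear_combination α * h3'
end

section
/- Let α, β be elements of the Laurent polynomial ring ℤ[A, A⁻¹], and define ⟨K⟩ = -A⁻³·α - A³·β and ⟨K_s⟩ = -A³·α - A⁻³·β. Then ⟨K⟩ = A⁶·⟨K_s⟩ if and only if α = 0. -/
open LaurentPolynomial

theorem bracket_pos_iff_alpha_zero (α β K Ks : LaurentPolynomial ℤ)
    (hK : K = -T (-3) * α - T 3 * β)
    (hKs : Ks = -T 3 * α - T (-3) * β) :
    K = T 6 * Ks ↔ α = 0 := by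
  subst hK hKs
  have h1 : T 6 * T 3 = (T 9 : LaurentPolynomial ℤ) := by rw [← T_add]; norm_num
  have h2 : T 6 * T (-3) = (T 3 : LaurentPolynomial ℤ) := by rw [← T_add]; norm_num
  constructor
  · intro h
    have h3 : (T (-3) - T 9 : LaurentPolynomial ℤ) * α = 0 := by
      linear_combination -h + α * h1 + β * h2
    have hne : (T (-3) - T 9 : LaurentPolynomial ℤ) ≠ 0 := by
      rw [sub_ne_zero]
      intro hc
      have := congrArg (fun p : LaurentPolynomial ℤ => p.coeff 9) hc
      simp at this
    exact (mul_eq_zero.mp h3).resolve_left hne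
  · intro h
    subst h
    linear_combination β * h2
end

section
/- Let α, β be elements of the Laurent polynomial ring ℤ[A, A⁻¹], and define ⟨K⟩ = -A⁻³·α - A³·β and ⟨K_s⟩ = -A³·α - A⁻³·β. Then ⟨K⟩ = A⁻⁶·⟨K_s⟩ if and only if β = 0. -/
open LaurentPolynomial

theorem bracket_neg_iff_beta_zero (α β K Ks : LaurentPolynomial ℤ)
    (hK : K = -T (-3) * α - T 3 * β)
    (hKs : Ks = -T 3 * α - T (-3) * β) :
    K = T (-6) * Ks ↔ β = 0 := by
  subst hK hKs
  have e1 : (T (-6) : LaurentPolynomial ℤ) * T 3 = T (-3) := by rw [← T_add]; norm_num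
  have e2 : (T (-6) : LaurentPolynomial ℤ) * T (-3) = T (-9) := by rw [← T_add]; norm_num
  constructor
  · intro h
    have h2 : (T 3 - T (-9) : LaurentPolynomial ℤ) * β = 0 := by
      linear_combination -h + α * e1 + β * e2
    have hne : (T 3 - T (-9) : LaurentPolynomial ℤ) ≠ 0 := by
      rw [sub_ne_zero]
      intro h3
      have h4 : (3 : ℤ) = -9 :=
        by have h5 := congrArg (fun p : LaurentPolynomial ℤ => p.coeff 3) h3; simp at h5
      norm_num at h4
    rcases mul_eq_zero.mp h2 with h | h
    · exact absurd h hne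
    · exact h
  · intro h
    subst h
    linear_combination α * e1
end

section
/- Let n be an integer. If there exists a Laurent polynomial W ∈ ℤ[t, t⁻¹] such that 1 - tⁿ = W·(1 - t)·(1 - t³), then n = 0. -/
open LaurentPolynomial

/-- The monoid hom `Multiplicative ℤ →* ℤ[ε]` sending `n` to `1 + n ε`. -/
noncomputable def dualHom : Multiplicative ℤ →* DualNumber ℤ where
  toFun n := (⟨1, Multiplicative.toAdd n⟩ : TrivSqZeroExt ℤ ℤ)
  map_one' := by ext <;> simp
  map_mul' a b := by
    ext
    · erw [TrivSqZeroExt.fst_mul]; simp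
    · erw [TrivSqZeroExt.snd_mul]; simp [add_comm]

noncomputable def evalDual : LaurentPolynomial ℤ →ₐ[ℤ] DualNumber ℤ :=
  AddMonoidAlgebra.lift ℤ (DualNumber ℤ) ℤ dualHom

theorem evalDual_T (n : ℤ) : evalDual (T n) = (⟨1, n⟩ : TrivSqZeroExt ℤ ℤ) := by
  rw [evalDual, T]
  erw [AddMonoidAlgebra.lift_single]
  simp [dualHom]
  rfl

theorem jones_monomial_exponent_zero (n : ℤ) (W : LaurentPolynomial ℤ)
    (h : 1 - T n = W * (1 - T 1) * (1 - T 3)) :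
    n = 0 := by
  have h2 := congrArg evalDual h
  simp only [map_sub, map_mul, map_one, evalDual_T] at h2
  have hsnd := congrArg TrivSqZeroExt.snd h2
  erw [TrivSqZeroExt.snd_sub, TrivSqZeroExt.snd_mul, TrivSqZeroExt.snd_mul] at hsnd
  have g1 : TrivSqZeroExt.fst (1 - (1, 1) : DualNumber ℤ) = 0 := by change (1 : ℤ) - 1 = 0; norm_num
  have s2 : TrivSqZeroExt.snd (1 : DualNumber ℤ) - TrivSqZeroExt.snd ((1, n) : DualNumber ℤ) = -n := by
    change (0 : ℤ) - n = -n; simp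
  erw [TrivSqZeroExt.fst_mul, g1] at hsnd
  simp at hsnd
  linarith
end

section
/- Let u be a unit of the Laurent polynomial ring ℤ[t, t⁻¹]. If (1 - t)·(1 - t³) divides 1 - u in ℤ[t, t⁻¹], then u = 1. -/
open LaurentPolynomial

/-- The monoid hom `Multiplicative ℤ →* ℤ[ε]` sending `n` to `1 + n ε`. -/
noncomputable def psiHom : Multiplicative ℤ →* DualNumber ℤ where
  toFun n := (1, n.toAdd)
  map_one' := rfl
  map_mul' a b := by
    ext
    · change (1:ℤ) = 1 * 1; simp
    · change a.toAdd + b.toAdd = (1:ℤ) • b.toAdd + MulOpposite.op (1:ℤ) • a.toAdd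
      simp [add_comm]

/-- Evaluation `ℤ[T;T⁻¹] →ₐ[ℤ] ℤ[ε]` sending `T n` to `1 + n ε`. -/
noncomputable def phiHom : LaurentPolynomial ℤ →ₐ[ℤ] DualNumber ℤ :=
  AddMonoidAlgebra.lift ℤ (DualNumber ℤ) ℤ psiHom

lemma phiHom_T (n : ℤ) : phiHom (T n) = 1 + (n : DualNumber ℤ) * DualNumber.eps := by
  have h1 : (T n : LaurentPolynomial ℤ) = AddMonoidAlgebra.single n 1 := rfl
  rw [phiHom, h1, AddMonoidAlgebra.lift_single]
  ext
  · simp [psiHom]; rfl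
  · simp [psiHom]; rfl

/-- Units of `ℤ[T;T⁻¹]` are `± T n`. -/
lemma units_eq (u : (LaurentPolynomial ℤ)ˣ) :
    ∃ n : ℤ, (u : LaurentPolynomial ℤ) = T n ∨ (u : LaurentPolynomial ℤ) = -T n := by
  obtain ⟨n, p, hp⟩ := exists_T_pow (u : LaurentPolynomial ℤ)
  obtain ⟨m, q, hq⟩ := exists_T_pow ((u⁻¹ : _ˣ) : LaurentPolynomial ℤ)
  have hpq : Polynomial.toLaurent (p * q) = T ((n : ℤ) + m) := by
    rw [map_mul, hp, hq]
    have : ((u : LaurentPolynomial ℤ) * T n) * (((u⁻¹ : (LaurentPolynomial ℤ)ˣ) : LaurentPolynomial ℤ) * T m)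
        = ((u : LaurentPolynomial ℤ) * ((u⁻¹ : (LaurentPolynomial ℤ)ˣ) : LaurentPolynomial ℤ)) * (T n * T m) := by ring
    rw [this, ← T_add]
    simp
  have hX : Polynomial.toLaurent ((Polynomial.X : Polynomial ℤ) ^ (n + m)) = T ((n : ℤ) + m) := by
    rw [Polynomial.toLaurent_X_pow]
    push_cast
    ring_nf
  have hpq' : p * q = Polynomial.X ^ (n + m) :=
    Polynomial.toLaurent_injective (hpq.trans hX.symm)
  have hdvd : p ∣ (Polynomial.X : Polynomial ℤ) ^ (n + m) := ⟨q, hpq'.symm⟩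
  obtain ⟨i, _, c, hc⟩ := (dvd_prime_pow Polynomial.prime_X (n + m)).mp hdvd
  -- hc : p * c = X ^ i
  have hcunit : IsUnit (c : Polynomial ℤ) := c.isUnit
  obtain ⟨r, hr, hrc⟩ := Polynomial.isUnit_iff.mp hcunit
  rcases Int.isUnit_iff.mp hr with rfl | rfl
  · refine ⟨(i : ℤ) - n, Or.inl ?_⟩
    have hp' : p = Polynomial.X ^ i := by
      rw [← hc, ← hrc]; simp
    have := hp
    rw [hp', Polynomial.toLaurent_X_pow] at this
    have h2 : (u : LaurentPolynomial ℤ) * T n * T (-n) = T i * T (-n) := by rw [this]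
    rw [mul_T_assoc, ← T_add] at h2
    simpa [sub_eq_add_neg] using h2
  · refine ⟨(i : ℤ) - n, Or.inr ?_⟩
    have hp' : p = -Polynomial.X ^ i := by
      have : p * (-1 : Polynomial ℤ) = Polynomial.X ^ i := by
        rw [← hc, ← hrc]; simp
      linear_combination -this
    have := hp
    rw [hp'] at this
    simp only [map_neg, Polynomial.toLaurent_X_pow] at this
    have h2 : (u : LaurentPolynomial ℤ) * T n * T (-n) = -T i * T (-n) := by rw [this]
    rw [mul_T_assoc, neg_mul, ← T_add] at h2
    simpa [sub_eq_add_neg] using h2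

theorem jones_unit_eq_one (u : (LaurentPolynomial ℤ)ˣ)
    (h : (1 - T 1) * (1 - T 3) ∣ 1 - (u : LaurentPolynomial ℤ)) :
    (u : LaurentPolynomial ℤ) = 1 := by
  obtain ⟨w, hw⟩ := h
  obtain ⟨k, hk | hk⟩ := units_eq u
  · have h0 : phiHom (1 - (u : LaurentPolynomial ℤ)) = 0 := by
      rw [hw, map_mul, map_mul, map_sub, map_sub, map_one, phiHom_T, phiHom_T]
      have heps : ((1 : DualNumber ℤ) - (1 + ((1 : ℤ) : DualNumber ℤ) * DualNumber.eps)) *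
          ((1 : DualNumber ℤ) - (1 + ((3 : ℤ) : DualNumber ℤ) * DualNumber.eps)) = 0 := by
        have h2 := DualNumber.eps_mul_eps (R := ℤ)
        linear_combination (3 : DualNumber ℤ) * h2
      rw [heps, zero_mul]
    rw [map_sub, map_one, hk, phiHom_T, sub_eq_zero] at h0
    have hk0 : k = 0 := by
      have := congrArg TrivSqZeroExt.snd h0
      simpa using this.symm
    rw [hk, hk0, T_zero]
  · exfalso
    have h0 : phiHom (1 - (u : LaurentPolynomial ℤ)) = 0 := by
      rw [hw, map_mul, map_mul, map_sub, map_sub, map_one, phiHom_T, phiHom_T]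
      have heps : ((1 : DualNumber ℤ) - (1 + ((1 : ℤ) : DualNumber ℤ) * DualNumber.eps)) *
          ((1 : DualNumber ℤ) - (1 + ((3 : ℤ) : DualNumber ℤ) * DualNumber.eps)) = 0 := by
        have h2 := DualNumber.eps_mul_eps (R := ℤ)
        linear_combination (3 : DualNumber ℤ) * h2
      rw [heps, zero_mul]
    rw [map_sub, map_one, hk, map_neg, phiHom_T, sub_eq_zero] at h0
    have := congrArg TrivSqZeroExt.fst h0
    simp at this
end
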